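/- The number of factorial posets on [n] is n!; more precisely, factorial posets on [n] are in bijection with sequences (b_1, ..., b_n) with b_k \in [0, k-1] (inversion tables), via b_k = |{x : x <_P k}|. -/

import Mathlib

open Finset

/-- A factorial poset on `[n]` (modelled on `Fin n`): a naturally labeled strict
partial order satisfying the factorial condition. -/
structure FactorialPoset (n : ℕ) where
  lt : Fin n → Fin n → Prop
  irrefl : ∀ i, ¬ lt i i
  trans : ∀ i j k, lt i j → lt j k → lt i k
  natural : ∀ i j, lt i j → i < j
  factorial : ∀ i j k : Fin n, i < j → lt j k → lt i k

namespace FactorialPoset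

variable {n : ℕ}

theorem ext' {P Q : FactorialPoset n} (h : P.lt = Q.lt) : P = Q := by
  cases P; cases Q; cases h; rfl

noncomputable instance (P : FactorialPoset n) (k : Fin n) :
    DecidablePred (fun x => P.lt x k) := Classical.decPred _

noncomputable def preSet (P : FactorialPoset n) (k : Fin n) : Finset (Fin n) :=
  univ.filter (fun x => P.lt x k)

theorem mem_preSet {P : FactorialPoset n} {k x : Fin n} :
    x ∈ P.preSet k ↔ P.lt x k := by simp [preSet]

theorem card_pre (P : FactorialPoset n) (k : Fin n) :
    Nat.card {x : Fin n // P.lt x k} = (P.preSet k).card := by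
  rw [Nat.card_eq_fintype_card, Fintype.card_subtype]
  rfl

theorem preSet_subset (P : FactorialPoset n) (k : Fin n) : P.preSet k ⊆ Iio k := by
  intro x hx
  simpa using P.natural _ _ (mem_preSet.mp hx)

theorem card_pre_le (P : FactorialPoset n) (k : Fin n) :
    (P.preSet k).card ≤ (k : ℕ) := by
  simpa [Fin.card_Iio] using Finset.card_le_card (P.preSet_subset k)

theorem mem_pre_iff (P : FactorialPoset n) (k : Fin n) (x : Fin n) :
    x ∈ P.preSet k ↔ (x : ℕ) < (P.preSet k).card := by
  constructor
  · intro hx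
    have hsub : Iic x ⊆ P.preSet k := by
      intro y hy
      rcases lt_or_eq_of_le (Finset.mem_Iic.mp hy) with h | h
      · exact mem_preSet.mpr (P.factorial _ _ _ h (mem_preSet.mp hx))
      · exact h ▸ hx
    have := Finset.card_le_card hsub
    rw [Fin.card_Iic] at this
    omega
  · intro hx
    by_contra hxn
    have hsub : P.preSet k ⊆ Iio x := by
      intro y hy
      simp only [Finset.mem_Iio]
      rcases lt_trichotomy y x with h | h | h
      · exact h
      · exact absurd (h ▸ hy) hxn
      · exact absurd (mem_preSet.mpr (P.factorial _ _ _ h (mem_preSet.mp hy))) hxn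
    have := Finset.card_le_card hsub
    rw [Fin.card_Iio] at this
    omega

theorem lt_iff (P : FactorialPoset n) (k x : Fin n) :
    P.lt x k ↔ (x : ℕ) < Nat.card {x : Fin n // P.lt x k} := by
  rw [card_pre, ← mem_preSet, mem_pre_iff]

/-- The factorial poset built from an inversion table. -/
def ofB (b : Fin n → ℕ) (hb : ∀ k : Fin n, b k ≤ (k : ℕ)) : FactorialPoset n where
  lt i k := (i : ℕ) < b k
  irrefl i h := absurd (lt_of_lt_of_le h (hb i)) (lt_irrefl _)
  trans i j k hij hjk := lt_trans (lt_of_lt_of_le hij (hb j)) hjk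
  natural i j h := Fin.lt_def.mpr (lt_of_lt_of_le h (hb j))
  factorial i j k hij hjk := lt_trans (Fin.lt_def.mp hij) hjk

theorem card_ofB (b : Fin n → ℕ) (hb : ∀ k : Fin n, b k ≤ (k : ℕ)) (k : Fin n) :
    Nat.card {x : Fin n // (ofB b hb).lt x k} = b k := by
  have hbk : b k < n := lt_of_le_of_lt (hb k) k.isLt
  rw [card_pre]
  have : (ofB b hb).preSet k = Iio (⟨b k, hbk⟩ : Fin n) := by
    ext x
    simp [mem_preSet, ofB, Fin.lt_def]
  rw [this, Fin.card_Iio]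

end FactorialPoset

theorem factorialPoset_card_and_bijection (n : ℕ) :
    (∀ b : Fin n → ℕ, (∀ k : Fin n, b k ≤ (k : ℕ)) →
      ∃! P : FactorialPoset n, ∀ k : Fin n, Nat.card {x : Fin n // P.lt x k} = b k) ∧
    Nat.card (FactorialPoset n) = n.factorial := by
  have huniq : ∀ b : Fin n → ℕ, (∀ k : Fin n, b k ≤ (k : ℕ)) →
      ∃! P : FactorialPoset n, ∀ k : Fin n, Nat.card {x : Fin n // P.lt x k} = b k := by
    intro b hb
    refine ⟨FactorialPoset.ofB b hb, FactorialPoset.card_ofB b hb, ?_⟩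
    intro P hP
    apply FactorialPoset.ext'
    funext x k
    have := P.lt_iff k x
    rw [hP k] at this
    simp only [FactorialPoset.ofB]
    exact propext this
  refine ⟨huniq, ?_⟩
  have e : FactorialPoset n ≃ (∀ k : Fin n, Fin ((k : ℕ) + 1)) := {
    toFun := fun P k => ⟨Nat.card {x : Fin n // P.lt x k}, by
      have := (P.card_pre_le k); rw [← P.card_pre k] at this; omega⟩
    invFun := fun b => FactorialPoset.ofB (fun k => (b k : ℕ)) (fun k => Fin.is_le _)
    left_inv := by
      intro P
      exact ((huniq (fun k => Nat.card {x : Fin n // P.lt x k})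
        (fun k => by show Nat.card _ ≤ _; rw [P.card_pre k]; exact P.card_pre_le k)).unique
        (FactorialPoset.card_ofB _ _) (fun k => rfl))
    right_inv := by
      intro b
      funext k
      exact Fin.ext (FactorialPoset.card_ofB _ _ k) }
  rw [Nat.card_congr e, Nat.card_eq_fintype_card, Fintype.card_pi]
  simp only [Fintype.card_fin]
  rw [Fin.prod_univ_eq_prod_range (fun i => i + 1), Finset.prod_range_add_one_eq_factorial]
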